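/- With φ̃ as above and p = 1, if all users share azimuth φ_k = φ₀, then the effective elevation is θ* = arcsin(sinθ_p − sinθ_q + sinθ_v) and the effective azimuth satisfies sinφ* = (sinφ₀/cosθ*)(cosθ_p − cosθ_q + cosθ_v), whenever the arcsin arguments lie in [−1,1] and cosθ* ≠ 0. In particular, if φ₀ = 0 then φ* = 0. -/

import Mathlib

open Real

/-- Fresnel phase of a point `(θ, φ, r)` observed at array element coordinates `(k_y, k_z)`. -/
noncomputable def fresnelPhase (θ φ r ky kz : ℝ) : ℝ :=
  kz * Real.sin θ + ky * Real.sin φ * Real.cos θ - (ky ^ 2 + kz ^ 2) / (2 * r)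

/-- Corollary 4 (same-azimuth case, third-order distortion): if all users share the azimuth
`φ₀`, the effective elevation is `arcsin(sin θ_p − sin θ_q + sin θ_v)` and the effective
azimuth satisfies `sin φ* = (sin φ₀ / cos θ*)(cos θ_p − cos θ_q + cos θ_v)`;
if `φ₀ = 0` then `φ* = 0`. -/
theorem same_azimuth_distortion (φ₀ θp θq θv rp rq rv : ℝ)
    (hrp : 0 < rp) (hrq : 0 < rq) (hrv : 0 < rv)
    (harg1 : |Real.sin θp - Real.sin θq + Real.sin θv| ≤ 1)
    (θs : ℝ) (hθs : θs = Real.arcsin (Real.sin θp - Real.sin θq + Real.sin θv))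
    (hcos : Real.cos θs ≠ 0)
    (harg2 : |Real.sin φ₀ * (Real.cos θp - Real.cos θq + Real.cos θv) / Real.cos θs| ≤ 1)
    (φs : ℝ)
    (hφs : φs = Real.arcsin
      (Real.sin φ₀ * (Real.cos θp - Real.cos θq + Real.cos θv) / Real.cos θs))
    (hρ : 0 < 1 / rp - 1 / rq + 1 / rv)
    (rs : ℝ) (hrs : rs = (1 / rp - 1 / rq + 1 / rv)⁻¹) :
    (∀ ky kz : ℝ,
      fresnelPhase θp φ₀ rp ky kz - fresnelPhase θq φ₀ rq ky kz
          + fresnelPhase θv φ₀ rv ky kz =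
        fresnelPhase θs φs rs ky kz) ∧
      (φ₀ = 0 → φs = 0) := by
  have hsin : Real.sin θs = Real.sin θp - Real.sin θq + Real.sin θv := by
    rw [hθs]; exact Real.sin_arcsin (abs_le.mp harg1).1 (abs_le.mp harg1).2
  have hsinφ : Real.sin φs =
      Real.sin φ₀ * (Real.cos θp - Real.cos θq + Real.cos θv) / Real.cos θs := by
    rw [hφs]; exact Real.sin_arcsin (abs_le.mp harg2).1 (abs_le.mp harg2).2
  have hr : (1:ℝ) / rs = 1 / rp - 1 / rq + 1 / rv := by
    rw [hrs, one_div, inv_inv]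
  constructor
  · intro ky kz
    unfold fresnelPhase
    have h1 : ky * Real.sin φs * Real.cos θs =
        ky * (Real.sin φ₀ * (Real.cos θp - Real.cos θq + Real.cos θv)) := by
      rw [hsinφ]; field_simp
    have h2 : (ky ^ 2 + kz ^ 2) / (2 * rs) =
        (ky ^ 2 + kz ^ 2) / (2 * rp) - (ky ^ 2 + kz ^ 2) / (2 * rq)
          + (ky ^ 2 + kz ^ 2) / (2 * rv) := by
      have : (ky ^ 2 + kz ^ 2) / (2 * rs) = (ky ^ 2 + kz ^ 2) / 2 * (1 / rs) := by
        ring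
      rw [this, hr]
      field_simp
    rw [h1, h2, hsin]
    ring
  · intro h0
    rw [hφs, h0]
    simp
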